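/- Fix r > 0 and ζ ∈ [0, 2π). Let w₁ := (1/√(1+r²))·(1, 0, r·cos ζ, r·sin ζ) and w₂ := (1/√(1+r²))·(0, 1, −r·sin ζ, r·cos ζ) in ℝ⁴, let W := Span{w₁, w₂}, and let Π_{W⊥} denote orthogonal projection of ℝ⁴ onto the orthogonal complement of W. Then for every (x⃗, y⃗) = (x₁, x₂, y₁, y₂) ∈ ℝ⁴, ‖Π_{W⊥}(x⃗, y⃗)‖² = (r²/(1+r²))·‖x⃗ − (1/r)·R_ζ(y⃗)‖², where R_ζ(y₁, y₂) := (y₁·cos ζ + y₂·sin ζ, −y₁·sin ζ + y₂·cos ζ). -/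

import Mathlib

open Metric Real

noncomputable section

/-- The point of `ℝ⁴` with coordinates `(a, b, c, d)`. -/
def pt4 (a b c d : ℝ) : EuclideanSpace ℝ (Fin 4) :=
  WithLp.toLp 2 (fun i : Fin 4 => if i = 0 then a else if i = 1 then b else if i = 2 then c else d)

/-- The point of `ℝ²` with coordinates `(a, b)`. -/
def pt2 (a b : ℝ) : EuclideanSpace ℝ (Fin 2) :=
  WithLp.toLp 2 (fun i : Fin 2 => if i = 0 then a else b)

/-- The vector `w₁ = (1/√(1+r²))·(1, 0, r cos ζ, r sin ζ)`. -/
def wvec₁ (r ζ : ℝ) : EuclideanSpace ℝ (Fin 4) :=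
  (Real.sqrt (1 + r ^ 2))⁻¹ • pt4 1 0 (r * Real.cos ζ) (r * Real.sin ζ)

/-- The vector `w₂ = (1/√(1+r²))·(0, 1, -r sin ζ, r cos ζ)`. -/
def wvec₂ (r ζ : ℝ) : EuclideanSpace ℝ (Fin 4) :=
  (Real.sqrt (1 + r ^ 2))⁻¹ • pt4 0 1 (-(r * Real.sin ζ)) (r * Real.cos ζ)

/-- The rotation `R_ζ(y₁, y₂) = (y₁ cos ζ + y₂ sin ζ, -y₁ sin ζ + y₂ cos ζ)` of `ℝ²`. -/
def rotPt (ζ y₁ y₂ : ℝ) : EuclideanSpace ℝ (Fin 2) :=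
  pt2 (y₁ * Real.cos ζ + y₂ * Real.sin ζ) (-(y₁ * Real.sin ζ) + y₂ * Real.cos ζ)

/-- computation in the proof of Lemma A.2: the norm of the projection
onto the orthogonal complement of `W = Span{w₁, w₂}`. -/
theorem statement16 (r ζ : ℝ) (hr : 0 < r) (hζ₀ : 0 ≤ ζ) (hζ₁ : ζ < 2 * π) :
    ∀ x₁ x₂ y₁ y₂ : ℝ,
      ‖(Submodule.orthogonalProjectionOnto
          ((Submodule.span ℝ {wvec₁ r ζ, wvec₂ r ζ} :
            Submodule ℝ (EuclideanSpace ℝ (Fin 4))))ᗮ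
          (pt4 x₁ x₂ y₁ y₂) : EuclideanSpace ℝ (Fin 4))‖ ^ 2 =
        r ^ 2 / (1 + r ^ 2) * ‖pt2 x₁ x₂ - r⁻¹ • rotPt ζ y₁ y₂‖ ^ 2 := by
  intro x₁ x₂ y₁ y₂
  have hR : (0:ℝ) < 1 + r ^ 2 := by positivity
  have hs0 : Real.sqrt (1 + r ^ 2) ≠ 0 := by positivity
  have hcs := Real.sin_sq_add_cos_sq ζ
  set e₁ : EuclideanSpace ℝ (Fin 4) := pt4 1 0 (r * Real.cos ζ) (r * Real.sin ζ) with he₁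
  set e₂ : EuclideanSpace ℝ (Fin 4) := pt4 0 1 (-(r * Real.sin ζ)) (r * Real.cos ζ) with he₂
  set a₁ : ℝ := (x₁ + r * Real.cos ζ * y₁ + r * Real.sin ζ * y₂) / (1 + r ^ 2) with ha₁
  set a₂ : ℝ := (x₂ - r * Real.sin ζ * y₁ + r * Real.cos ζ * y₂) / (1 + r ^ 2) with ha₂
  set u : EuclideanSpace ℝ (Fin 4) := pt4 x₁ x₂ y₁ y₂ - a₁ • e₁ - a₂ • e₂ with hu
  set W : Submodule ℝ (EuclideanSpace ℝ (Fin 4)) := Submodule.span ℝ {wvec₁ r ζ, wvec₂ r ζ} with hW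
  have hie₁ : (inner ℝ e₁ u : ℝ) = 0 := by
    simp [hu, he₁, he₂, PiLp.inner_apply, RCLike.inner_apply,
      Fin.sum_univ_four, pt4, PiLp.sub_apply, PiLp.smul_apply, smul_eq_mul, ha₁, ha₂]
    field_simp
    linear_combination (-(r^2) * (x₁ + r*Real.cos ζ*y₁ + r*Real.sin ζ*y₂)) * hcs
  have hie₂ : (inner ℝ e₂ u : ℝ) = 0 := by
    simp [hu, he₁, he₂, PiLp.inner_apply, RCLike.inner_apply,
      Fin.sum_univ_four, pt4, PiLp.sub_apply, PiLp.smul_apply, smul_eq_mul, ha₁, ha₂]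
    field_simp
    linear_combination (-(r^2) * (x₂ - r*Real.sin ζ*y₁ + r*Real.cos ζ*y₂)) * hcs
  have hw₁ : wvec₁ r ζ = (Real.sqrt (1 + r ^ 2))⁻¹ • e₁ := by rw [he₁]; rfl
  have hw₂ : wvec₂ r ζ = (Real.sqrt (1 + r ^ 2))⁻¹ • e₂ := by rw [he₂]; rfl
  have hue : u ∈ Wᗮ := by
    rw [Submodule.mem_orthogonal]
    intro v hv
    induction hv using Submodule.span_induction with
    | mem v hv =>
      rcases hv with h | h
      · rw [h, hw₁, real_inner_smul_left, hie₁, mul_zero]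
      · rw [h, hw₂, real_inner_smul_left, hie₂, mul_zero]
    | zero => exact inner_zero_left u
    | add v w _ _ hv hw => rw [inner_add_left, hv, hw, add_zero]
    | smul c v _ hv => rw [real_inner_smul_left, hv, mul_zero]
  have hpW : a₁ • e₁ + a₂ • e₂ ∈ W := by
    have h1 : e₁ = Real.sqrt (1 + r ^ 2) • wvec₁ r ζ := by
      rw [hw₁, smul_smul, mul_inv_cancel₀ hs0, one_smul]
    have h2 : e₂ = Real.sqrt (1 + r ^ 2) • wvec₂ r ζ := by
      rw [hw₂, smul_smul, mul_inv_cancel₀ hs0, one_smul]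
    rw [h1, h2, smul_smul, smul_smul]
    exact Submodule.add_mem _
      (Submodule.smul_mem _ _ (Submodule.subset_span (Or.inl rfl)))
      (Submodule.smul_mem _ _ (Submodule.subset_span (Or.inr rfl)))
  have hproj : (Submodule.orthogonalProjectionOnto Wᗮ (pt4 x₁ x₂ y₁ y₂) : EuclideanSpace ℝ (Fin 4)) = u := by
    rw [← Submodule.starProjection_apply]
    refine Submodule.eq_starProjection_of_mem_orthogonal' hue
      (Submodule.le_orthogonal_orthogonal W hpW) ?_
    rw [hu]; abel
  have key : (inner ℝ u u : ℝ) = inner ℝ u (pt4 x₁ x₂ y₁ y₂) := by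
    have h1 : (inner ℝ u e₁ : ℝ) = 0 := by rw [real_inner_comm]; exact hie₁
    have h2 : (inner ℝ u e₂ : ℝ) = 0 := by rw [real_inner_comm]; exact hie₂
    have : (pt4 x₁ x₂ y₁ y₂ : EuclideanSpace ℝ (Fin 4)) = u + (a₁ • e₁ + a₂ • e₂) := by
      rw [hu]; abel
    rw [this, inner_add_right, inner_add_right, real_inner_smul_right,
      real_inner_smul_right, h1, h2]
    ring
  rw [hproj, ← real_inner_self_eq_norm_sq, ← real_inner_self_eq_norm_sq, key]
  simp [hu, he₁, he₂, PiLp.inner_apply, RCLike.inner_apply, Fin.sum_univ_four,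
    Fin.sum_univ_two, pt4, pt2, rotPt, PiLp.sub_apply, PiLp.smul_apply, smul_eq_mul,
    ha₁, ha₂, EuclideanSpace.norm_sq_eq]
  field_simp
  linear_combination (-(1 + r^2) * (y₁^2 + y₂^2)) * hcs
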